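/- For each j in a finite index set K, let (A_j, p_{A_j}) be an ensemble of functions U_j^n → Im A_j satisfying the strong (α_j, β_j)-hash condition, with all A_j mutually independent. For J ⊆ K define α_J ≡ Π_{j∈J} α_j and β_J ≡ Π_{j∈J}(β_j+1) − 1. Then for every G ⊆ Π_{j∈K} U_j^n and every tuple u_K: P({A_K : (G \ {u_K}) ∩ C_{A_K}(A_K u_K) ≠ ∅}) ≤ Σ over nonempty J ⊆ K of |G_{J|J^c}|·α_J·(β_{J^c}+1)/|Im A_J| + β_K, where |Im A_J| ≡ Π_{j∈J}|Im A_j| and |G_{J|J^c}| is the maximum, over tuples u_{J^c} occurring in G, of the number of completions u_J with (u_J, u_{J^c}) ∈ G (with the convention |G_{∅|K}| = 1 and |G_{K|∅}| = |G|). -/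

import Mathlib

open Finset
open scoped Classical

/-- Collision probability `p_A({A : Au = Au'})` for an ensemble of functions. -/
noncomputable def collP {𝒜 X B : Type*} [Fintype 𝒜] (p : 𝒜 → ℝ)
    (F : 𝒜 → X → B) (u u' : X) : ℝ :=
  ∑ a : 𝒜, if F a u = F a u' then p a else 0

/-- The strong (α,β)-hash condition for an ensemble of functions `X → B`. -/
noncomputable def StrongHash {𝒜 X B : Type*} [Fintype 𝒜] [Fintype X] [Fintype B]
    (p : 𝒜 → ℝ) (F : 𝒜 → X → B) (α β : ℝ) : Prop :=
  ∀ u : X,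
    ∑ u' ∈ (Finset.univ.erase u).filter
        (fun u' => α / (Fintype.card B : ℝ) < collP p F u u'),
      collP p F u u' ≤ β

/-- `|G_{J|J^c}|`: the maximum, over tuples occurring in `G`, of the number of
completions on the `J` coordinates, with the conventions `|G_{∅|K}| = 1` and
`|G_{K|∅}| = |G|`. -/
noncomputable def fiberMax {K : Type*} [Fintype K] {X : K → Type*}
    (G : Finset (∀ j, X j)) (J : Finset K) : ℕ :=
  if J = ∅ then 1
  else if J = Finset.univ then G.card
  else G.sup fun w => (G.filter fun w' => ∀ j ∉ J, w' j = w j).card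

lemma prod_ite_all {ι : Type*} [Fintype ι] (Q : ι → Prop) (f : ι → ℝ) :
    (∏ j, if Q j then f j else 0) = if ∀ j, Q j then ∏ j, f j else 0 := by
  by_cases h : ∀ j, Q j
  · rw [if_pos h]; exact Finset.prod_congr rfl fun j _ => if_pos (h j)
  · rw [if_neg h]
    push_neg at h
    obtain ⟨j, hj⟩ := h
    exact Finset.prod_eq_zero (mem_univ j) (if_neg hj)

lemma collP_symm {𝒜 X B : Type*} [Fintype 𝒜] (p : 𝒜 → ℝ) (F : 𝒜 → X → B)
    (u u' : X) : collP p F u u' = collP p F u' u := by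
  refine Finset.sum_congr rfl fun a _ => ?_
  by_cases h : F a u = F a u'
  · rw [if_pos h, if_pos h.symm]
  · rw [if_neg h, if_neg fun h' => h h'.symm]

lemma collP_nonneg {𝒜 X B : Type*} [Fintype 𝒜] (p : 𝒜 → ℝ) (hp : ∀ a, 0 ≤ p a)
    (F : 𝒜 → X → B) (u u' : X) : 0 ≤ collP p F u u' := by
  refine Finset.sum_nonneg fun a _ => ?_
  split <;> simp [hp a]

set_option maxHeartbeats 1000000 in
/-- Multi-terminal collision-resistance property. -/
theorem stmt8 {K : Type*} [Fintype K] {X B 𝒜 : K → Type*}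
    [∀ j, Fintype (X j)] [∀ j, Fintype (B j)] [∀ j, Fintype (𝒜 j)]
    (p : ∀ j, 𝒜 j → ℝ) (hp : ∀ j a, 0 ≤ p j a) (hp1 : ∀ j, ∑ a : 𝒜 j, p j a = 1)
    (F : ∀ j, 𝒜 j → X j → B j)
    (α β : K → ℝ) (hα : ∀ j, 0 ≤ α j) (hβ : ∀ j, 0 ≤ β j)
    (hhash : ∀ j, StrongHash (p j) (F j) (α j) (β j))
    (G : Finset (∀ j, X j)) (u : ∀ j, X j) :
    ∑ a : ∀ j, 𝒜 j,
        (if ∃ w ∈ G.erase u, ∀ j, F j (a j) (w j) = F j (a j) (u j)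
          then ∏ j, p j (a j) else 0) ≤
      (∑ J ∈ Finset.univ.powerset.filter (fun J : Finset K => J.Nonempty),
        (fiberMax G J : ℝ) * (∏ j ∈ J, α j) * (∏ j ∈ Jᶜ, (β j + 1))
          / ∏ j ∈ J, (Fintype.card (B j) : ℝ))
        + ((∏ j, (β j + 1)) - 1) := by
  classical
  -- abbreviations
  set t : K → ℝ := fun j => α j / (Fintype.card (B j) : ℝ) with ht
  set c : (∀ j, X j) → K → ℝ := fun w j => collP (p j) (F j) (w j) (u j) with hc
  have hc_nonneg : ∀ w j, 0 ≤ c w j := fun w j => collP_nonneg _ (hp j) _ _ _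
  have ht_nonneg : ∀ j, 0 ≤ t j := fun j =>
    div_nonneg (hα j) (Nat.cast_nonneg _)
  have hc_one : ∀ w j, w j = u j → c w j = 1 := by
    intro w j h
    simp only [hc, collP, h, if_pos rfl]
    simpa using hp1 j
  -- the per-coordinate dominating weight
  set d : ∀ j, X j → ℝ := fun j x =>
    if x = u j then 1
    else if t j < collP (p j) (F j) x (u j) then collP (p j) (F j) x (u j) else 0
    with hd
  have hd_nonneg : ∀ j x, 0 ≤ d j x := by
    intro j x
    simp only [hd]
    split
    · exact zero_le_one
    · split
      · exact collP_nonneg _ (hp j) _ _ _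
      · exact le_refl 0
  have hd_sum : ∀ j, ∑ x, d j x ≤ 1 + β j := by
    intro j
    rw [← Finset.add_sum_erase univ (d j) (mem_univ (u j))]
    have h1 : d j (u j) = 1 := by simp [hd]
    rw [h1]
    gcongr
    have h2 : ∑ x ∈ univ.erase (u j), d j x
        = ∑ x ∈ (univ.erase (u j)).filter
            (fun x => t j < collP (p j) (F j) (u j) x),
          collP (p j) (F j) (u j) x := by
      rw [Finset.sum_filter]
      refine Finset.sum_congr rfl fun x hx => ?_
      have hxu : x ≠ u j := (Finset.mem_erase.mp hx).1
      rw [collP_symm (p j) (F j) (u j) x]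
      simp only [hd, if_neg hxu]
    rw [h2]
    exact hhash j (u j)
  -- sets of "small" and "large" nontrivial coordinates
  set S : (∀ j, X j) → Finset K :=
    fun w => univ.filter (fun j => w j ≠ u j ∧ c w j ≤ t j) with hS
  set L : (∀ j, X j) → Finset K :=
    fun w => univ.filter (fun j => w j ≠ u j ∧ t j < c w j) with hL
  -- product formula for the collision probability of a fixed pair
  have hprod : ∀ w : ∀ j, X j,
      (∑ a : ∀ j, 𝒜 j, if ∀ j, F j (a j) (w j) = F j (a j) (u j)
          then ∏ j, p j (a j) else 0) = ∏ j, c w j := by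
    intro w
    have : ∀ j, c w j = ∑ aj ∈ (univ : Finset (𝒜 j)),
        (if F j aj (w j) = F j aj (u j) then p j aj else 0) := by
      intro j; rfl
    rw [Finset.prod_congr rfl fun j _ => this j, Finset.prod_univ_sum,
      Fintype.piFinset_univ]
    refine Finset.sum_congr rfl fun a _ => ?_
    exact (prod_ite_all (fun j => F j (a j) (w j) = F j (a j) (u j))
      (fun j => p j (a j))).symm
  -- Step 1: union bound
  have step1 : ∑ a : ∀ j, 𝒜 j,
        (if ∃ w ∈ G.erase u, ∀ j, F j (a j) (w j) = F j (a j) (u j)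
          then ∏ j, p j (a j) else 0)
      ≤ ∑ w ∈ G.erase u, ∏ j, c w j := by
    have : ∀ a : ∀ j, 𝒜 j,
        (if ∃ w ∈ G.erase u, ∀ j, F j (a j) (w j) = F j (a j) (u j)
          then ∏ j, p j (a j) else 0)
        ≤ ∑ w ∈ G.erase u,
          (if ∀ j, F j (a j) (w j) = F j (a j) (u j)
            then ∏ j, p j (a j) else 0) := by
      intro a
      by_cases hex : ∃ w ∈ G.erase u, ∀ j, F j (a j) (w j) = F j (a j) (u j)
      · rw [if_pos hex]
        obtain ⟨w₀, hw₀, hP⟩ := hex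
        have hnn : ∀ w ∈ G.erase u, 0 ≤
            (if ∀ j, F j (a j) (w j) = F j (a j) (u j) then ∏ j, p j (a j) else 0) := by
          intro w _
          by_cases h : ∀ j, F j (a j) (w j) = F j (a j) (u j) <;>
            simp [h, Finset.prod_nonneg fun j _ => hp j (a j)]
        have := Finset.single_le_sum hnn hw₀
        rwa [if_pos hP] at this
      · rw [if_neg hex]
        refine Finset.sum_nonneg fun w _ => ?_
        by_cases h : ∀ j, F j (a j) (w j) = F j (a j) (u j) <;>
          simp [h, Finset.prod_nonneg fun j _ => hp j (a j)]
    calc ∑ a : ∀ j, 𝒜 j,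
        (if ∃ w ∈ G.erase u, ∀ j, F j (a j) (w j) = F j (a j) (u j)
          then ∏ j, p j (a j) else 0)
        ≤ ∑ a : ∀ j, 𝒜 j, ∑ w ∈ G.erase u,
            (if ∀ j, F j (a j) (w j) = F j (a j) (u j)
              then ∏ j, p j (a j) else 0) := Finset.sum_le_sum fun a _ => this a
      _ = ∑ w ∈ G.erase u, ∑ a : ∀ j, 𝒜 j,
            (if ∀ j, F j (a j) (w j) = F j (a j) (u j)
              then ∏ j, p j (a j) else 0) := Finset.sum_comm
      _ = ∑ w ∈ G.erase u, ∏ j, c w j :=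
            Finset.sum_congr rfl fun w _ => hprod w
  -- Step 2: pointwise bound by small/large decomposition
  have step2 : ∀ w : ∀ j, X j,
      (∏ j, c w j) ≤ (∏ j ∈ S w, t j) * ∏ j ∈ L w, c w j := by
    intro w
    have hdisj : Disjoint (S w) (L w) := by
      simp only [hS, hL, Finset.disjoint_filter]
      intro j _ hj1 hj2
      exact absurd hj2.2 (not_lt.mpr hj1.2)
    have hcompl : ∀ j, j ∉ S w ∪ L w → c w j = 1 := by
      intro j hj
      simp only [Finset.mem_union, hS, hL, Finset.mem_filter, mem_univ,
        true_and, not_or] at hj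
      by_cases hju : w j = u j
      · exact hc_one w j hju
      · exfalso
        rcases le_or_gt (c w j) (t j) with h | h
        · exact hj.1 ⟨hju, h⟩
        · exact hj.2 ⟨hju, h⟩
    calc ∏ j, c w j
        = (∏ j ∈ S w ∪ L w, c w j) * ∏ j ∈ (S w ∪ L w)ᶜ, c w j :=
          (Finset.prod_mul_prod_compl _ _).symm
      _ = ((∏ j ∈ S w, c w j) * ∏ j ∈ L w, c w j) * ∏ j ∈ (S w ∪ L w)ᶜ, c w j := by
          rw [Finset.prod_union hdisj]
      _ = (∏ j ∈ S w, c w j) * ∏ j ∈ L w, c w j := by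
          rw [Finset.prod_eq_one (f := fun j => c w j)
            (fun j hj => hcompl j (Finset.mem_compl.mp hj)), mul_one]
      _ ≤ (∏ j ∈ S w, t j) * ∏ j ∈ L w, c w j := by
          refine mul_le_mul_of_nonneg_right ?_
            (Finset.prod_nonneg fun j _ => hc_nonneg w j)
          refine Finset.prod_le_prod (fun j _ => hc_nonneg w j) (fun j hj => ?_)
          simp only [hS, Finset.mem_filter] at hj
          exact hj.2.2
  -- Claim A: contribution of tuples with no small nontrivial coordinate
  have claimA : ∑ w ∈ (G.erase u).filter (fun w => S w = ∅),
      (∏ j ∈ S w, t j) * ∏ j ∈ L w, c w j ≤ (∏ j, (β j + 1)) - 1 := by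
    have hterm : ∀ w ∈ (G.erase u).filter (fun w => S w = ∅),
        (∏ j ∈ S w, t j) * ∏ j ∈ L w, c w j = ∏ j, d j (w j) := by
      intro w hw
      obtain ⟨hwG, hwS⟩ := Finset.mem_filter.mp hw
      rw [hwS, Finset.prod_empty, one_mul]
      have hLd : ∀ j ∈ L w, c w j = d j (w j) := by
        intro j hj
        simp only [hL, Finset.mem_filter] at hj
        simp only [hd]
        rw [if_neg hj.2.1,
          if_pos (show t j < collP (p j) (F j) (w j) (u j) from hj.2.2)]
      rw [Finset.prod_congr rfl hLd]
      refine Finset.prod_subset (Finset.subset_univ _) ?_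
      intro j _ hj
      by_cases hju : w j = u j
      · simp [hd, hju]
      · exfalso
        rcases le_or_gt (c w j) (t j) with h | h
        · have : j ∈ S w := by
            simp only [hS, Finset.mem_filter, mem_univ, true_and]
            exact ⟨hju, h⟩
          rw [hwS] at this
          exact absurd this (Finset.notMem_empty j)
        · refine hj ?_
          simp only [hL, Finset.mem_filter, mem_univ, true_and]
          exact ⟨hju, h⟩
    have hsub : (G.erase u).filter (fun w => S w = ∅) ⊆ univ.erase u := by
      intro w hw
      obtain ⟨hwG, _⟩ := Finset.mem_filter.mp hw
      exact Finset.mem_erase.mpr ⟨(Finset.mem_erase.mp hwG).1, mem_univ w⟩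
    calc ∑ w ∈ (G.erase u).filter (fun w => S w = ∅),
          (∏ j ∈ S w, t j) * ∏ j ∈ L w, c w j
        = ∑ w ∈ (G.erase u).filter (fun w => S w = ∅), ∏ j, d j (w j) :=
          Finset.sum_congr rfl hterm
      _ ≤ ∑ w ∈ univ.erase u, ∏ j, d j (w j) :=
          Finset.sum_le_sum_of_subset_of_nonneg hsub
            (fun w _ _ => Finset.prod_nonneg fun j _ => hd_nonneg j (w j))
      _ = (∑ w : ∀ j, X j, ∏ j, d j (w j)) - ∏ j, d j (u j) := by
          have := Finset.add_sum_erase univ (fun w => ∏ j, d j (w j)) (mem_univ u)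
          linarith
      _ = (∑ w : ∀ j, X j, ∏ j, d j (w j)) - 1 := by
          have : ∏ j, d j (u j) = 1 :=
            Finset.prod_eq_one fun j _ => by simp [hd]
          rw [this]
      _ ≤ (∏ j, (β j + 1)) - 1 := by
          have hfub : ∑ w : ∀ j, X j, ∏ j, d j (w j)
              = ∏ j, ∑ x, d j x := by
            rw [Finset.prod_univ_sum (fun j => (univ : Finset (X j))) d,
              Fintype.piFinset_univ]
          rw [hfub]
          refine sub_le_sub_right ?_ 1
          refine Finset.prod_le_prod (fun j _ => Finset.sum_nonneg
            fun x _ => hd_nonneg j x) (fun j _ => ?_)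
          have := hd_sum j
          linarith
  -- Claim B: contribution of tuples with small coordinates exactly J ≠ ∅
  have claimB : ∀ J : Finset K, J.Nonempty →
      ∑ w ∈ (G.erase u).filter (fun w => S w = J),
        (∏ j ∈ S w, t j) * ∏ j ∈ L w, c w j
      ≤ (∏ j ∈ J, t j) * ((fiberMax G J : ℝ) * ∏ j ∈ Jᶜ, (β j + 1)) := by
    intro J hJ
    set W : Finset (∀ j, X j) := (G.erase u).filter (fun w => S w = J) with hW
    set e : (∀ j, X j) → (∀ j, X j) :=
      fun w j => if j ∈ J then u j else w j with he
    set g : (∀ j, X j) → ℝ := fun v => ∏ j ∈ Jᶜ, d j (v j) with hg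
    have hg_nonneg : ∀ v, 0 ≤ g v :=
      fun v => Finset.prod_nonneg fun j _ => hd_nonneg j (v j)
    -- rewrite each term
    have hterm : ∀ w ∈ W, (∏ j ∈ S w, t j) * ∏ j ∈ L w, c w j
        = (∏ j ∈ J, t j) * g (e w) := by
      intro w hw
      obtain ⟨hwG, hwS⟩ := Finset.mem_filter.mp hw
      rw [hwS]
      congr 1
      have hLsub : L w ⊆ Jᶜ := by
        intro j hj
        simp only [hL, Finset.mem_filter, mem_univ, true_and] at hj
        rw [Finset.mem_compl, ← hwS]
        simp only [hS, Finset.mem_filter, mem_univ, true_and]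
        intro h
        exact absurd hj.2 (not_lt.mpr h.2)
      have hLd : ∀ j ∈ L w, c w j = d j (e w j) := by
        intro j hj
        have hjc : j ∈ Jᶜ := hLsub hj
        simp only [hL, Finset.mem_filter, mem_univ, true_and] at hj
        simp only [hd, he]
        rw [if_neg (Finset.mem_compl.mp hjc)]
        rw [if_neg hj.1,
          if_pos (show t j < collP (p j) (F j) (w j) (u j) from hj.2)]
      rw [Finset.prod_congr rfl hLd, hg]
      refine Finset.prod_subset hLsub ?_
      intro j hjc hj
      have hjJ : j ∉ J := Finset.mem_compl.mp hjc
      have hew : e w j = w j := by simp only [he]; rw [if_neg hjJ]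
      rw [hew]
      by_cases hju : w j = u j
      · simp [hd, hju]
      · exfalso
        rcases le_or_gt (c w j) (t j) with h | h
        · have : j ∈ S w := by
            simp only [hS, Finset.mem_filter, mem_univ, true_and]
            exact ⟨hju, h⟩
          rw [hwS] at this
          exact hjJ this
        · refine hj ?_
          simp only [hL, Finset.mem_filter, mem_univ, true_and]
          exact ⟨hju, h⟩
    -- fiber counting bound
    have hfiber : ∀ v ∈ W.image e,
        ((W.filter (fun w => e w = v)).card : ℝ) ≤ (fiberMax G J : ℝ) := by
      intro v hv
      obtain ⟨w₀, hw₀, hew₀⟩ := Finset.mem_image.mp hv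
      have hw₀G : w₀ ∈ G := (Finset.mem_erase.mp
        (Finset.mem_filter.mp hw₀).1).2
      have hsub : W.filter (fun w => e w = v)
          ⊆ G.filter (fun w' => ∀ j ∉ J, w' j = w₀ j) := by
        intro w hw
        obtain ⟨hwW, hwe⟩ := Finset.mem_filter.mp hw
        refine Finset.mem_filter.mpr ⟨(Finset.mem_erase.mp
          (Finset.mem_filter.mp hwW).1).2, ?_⟩
        intro j hjJ
        have h1 : w j = e w j := by simp only [he]; rw [if_neg hjJ]
        have h2 : w₀ j = e w₀ j := by simp only [he]; rw [if_neg hjJ]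
        rw [h1, hwe, ← hew₀, ← h2]
      have hcard := Finset.card_le_card hsub
      rcases eq_or_ne J univ with hJu | hJu
      · have : fiberMax G J = G.card := by
          rw [fiberMax, if_neg (Finset.nonempty_iff_ne_empty.mp hJ), if_pos hJu]
        rw [this]
        exact_mod_cast le_trans hcard
          (Finset.card_le_card (Finset.filter_subset _ _))
      · have : fiberMax G J
            = G.sup fun w => (G.filter fun w' => ∀ j ∉ J, w' j = w j).card := by
          rw [fiberMax, if_neg (Finset.nonempty_iff_ne_empty.mp hJ), if_neg hJu]
        rw [this]
        exact_mod_cast le_trans hcard (Finset.le_sup (f := fun w =>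
          (G.filter fun w' => ∀ j ∉ J, w' j = w j).card) hw₀G)
    -- sum over projections
    set tt : ∀ j, Finset (X j) :=
      fun j => if j ∈ J then {u j} else univ with htt
    have himg : W.image e ⊆ Fintype.piFinset tt := by
      intro v hv
      obtain ⟨w, _, hew⟩ := Finset.mem_image.mp hv
      rw [Fintype.mem_piFinset]
      intro j
      simp only [htt]
      by_cases hjJ : j ∈ J
      · rw [if_pos hjJ, ← hew]
        simp only [he]
        rw [if_pos hjJ]
        exact Finset.mem_singleton_self _
      · rw [if_neg hjJ]; exact mem_univ _
    have hgsum : ∑ v ∈ Fintype.piFinset tt, g v ≤ ∏ j ∈ Jᶜ, (β j + 1) := by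
      set d' : ∀ j, X j → ℝ := fun j x => if j ∈ J then 1 else d j x with hd'
      have hgv : ∀ v, g v = ∏ j, d' j (v j) := by
        intro v
        rw [← Finset.prod_mul_prod_compl J (fun j => d' j (v j))]
        have h1 : ∏ j ∈ J, d' j (v j) = 1 :=
          Finset.prod_eq_one fun j hj => by simp only [hd']; rw [if_pos hj]
        have h2 : ∏ j ∈ Jᶜ, d' j (v j) = ∏ j ∈ Jᶜ, d j (v j) :=
          Finset.prod_congr rfl fun j hj => by
            simp only [hd']; rw [if_neg (Finset.mem_compl.mp hj)]
        rw [h1, h2, one_mul, hg]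
      calc ∑ v ∈ Fintype.piFinset tt, g v
          = ∑ v ∈ Fintype.piFinset tt, ∏ j, d' j (v j) :=
            Finset.sum_congr rfl fun v _ => hgv v
        _ = ∏ j, ∑ x ∈ tt j, d' j x := (Finset.prod_univ_sum tt d').symm
        _ ≤ ∏ j, (if j ∈ J then 1 else (β j + 1)) := by
            refine Finset.prod_le_prod (fun j _ => Finset.sum_nonneg
              fun x _ => ?_) (fun j _ => ?_)
            · simp only [hd']
              split
              · exact zero_le_one
              · exact hd_nonneg j x
            · by_cases hjJ : j ∈ J
              · simp only [htt, hd']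
                rw [if_pos hjJ, if_pos hjJ, Finset.sum_singleton, if_pos hjJ]
              · simp only [htt, hd']
                rw [if_neg hjJ, if_neg hjJ]
                have h3 : ∑ x ∈ (univ : Finset (X j)),
                    (if j ∈ J then 1 else d j x) = ∑ x, d j x :=
                  Finset.sum_congr rfl fun x _ => by rw [if_neg hjJ]
                rw [h3]
                have := hd_sum j
                linarith
        _ = ∏ j ∈ Jᶜ, (β j + 1) := by
            rw [← Finset.prod_mul_prod_compl J
              (fun j => if j ∈ J then 1 else (β j + 1))]
            have h1 : ∏ j ∈ J, (if j ∈ J then (1:ℝ) else (β j + 1)) = 1 :=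
              Finset.prod_eq_one fun j hj => if_pos hj
            have h2 : ∏ j ∈ Jᶜ, (if j ∈ J then (1:ℝ) else (β j + 1))
                = ∏ j ∈ Jᶜ, (β j + 1) :=
              Finset.prod_congr rfl fun j hj =>
                if_neg (Finset.mem_compl.mp hj)
            rw [h1, h2, one_mul]
    -- put claim B together
    calc ∑ w ∈ W, (∏ j ∈ S w, t j) * ∏ j ∈ L w, c w j
        = ∑ w ∈ W, (∏ j ∈ J, t j) * g (e w) := Finset.sum_congr rfl hterm
      _ = (∏ j ∈ J, t j) * ∑ w ∈ W, g (e w) := by rw [Finset.mul_sum]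
      _ ≤ (∏ j ∈ J, t j) * ((fiberMax G J : ℝ) * ∏ j ∈ Jᶜ, (β j + 1)) := by
          refine mul_le_mul_of_nonneg_left ?_
            (Finset.prod_nonneg fun j _ => ht_nonneg j)
          calc ∑ w ∈ W, g (e w)
              = ∑ v ∈ W.image e, (W.filter (fun w => e w = v)).card • g v :=
                Finset.sum_comp g e
            _ ≤ ∑ v ∈ W.image e, (fiberMax G J : ℝ) * g v := by
                refine Finset.sum_le_sum fun v hv => ?_
                rw [nsmul_eq_mul]
                exact mul_le_mul_of_nonneg_right (hfiber v hv) (hg_nonneg v)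
            _ = (fiberMax G J : ℝ) * ∑ v ∈ W.image e, g v := by
                rw [Finset.mul_sum]
            _ ≤ (fiberMax G J : ℝ) * ∑ v ∈ Fintype.piFinset tt, g v := by
                refine mul_le_mul_of_nonneg_left ?_ (Nat.cast_nonneg _)
                exact Finset.sum_le_sum_of_subset_of_nonneg himg
                  fun v _ _ => hg_nonneg v
            _ ≤ (fiberMax G J : ℝ) * ∏ j ∈ Jᶜ, (β j + 1) :=
                mul_le_mul_of_nonneg_left hgsum (Nat.cast_nonneg _)
  -- Assemble everything
  have step3 : ∑ w ∈ G.erase u, (∏ j ∈ S w, t j) * ∏ j ∈ L w, c w j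
      = ∑ J : Finset K, ∑ w ∈ (G.erase u).filter (fun w => S w = J),
          (∏ j ∈ S w, t j) * ∏ j ∈ L w, c w j :=
    (Finset.sum_fiberwise _ S _).symm
  have hsplit : ∑ J : Finset K, ∑ w ∈ (G.erase u).filter (fun w => S w = J),
          (∏ j ∈ S w, t j) * ∏ j ∈ L w, c w j
      = (∑ w ∈ (G.erase u).filter (fun w => S w = ∅),
          (∏ j ∈ S w, t j) * ∏ j ∈ L w, c w j)
        + ∑ J ∈ univ.filter (fun J : Finset K => ¬ J = ∅),
            ∑ w ∈ (G.erase u).filter (fun w => S w = J),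
              (∏ j ∈ S w, t j) * ∏ j ∈ L w, c w j := by
    rw [← Finset.sum_filter_add_sum_filter_not univ
      (fun J : Finset K => J = ∅)]
    congr 1
    rw [Finset.filter_eq' univ (∅ : Finset K), if_pos (mem_univ _),
      Finset.sum_singleton]
  have hidx : Finset.univ.powerset.filter (fun J : Finset K => J.Nonempty)
      = univ.filter (fun J : Finset K => ¬ J = ∅) := by
    rw [Finset.powerset_univ]
    exact Finset.filter_congr fun J _ => by
      rw [Finset.nonempty_iff_ne_empty]
  calc ∑ a : ∀ j, 𝒜 j,
        (if ∃ w ∈ G.erase u, ∀ j, F j (a j) (w j) = F j (a j) (u j)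
          then ∏ j, p j (a j) else 0)
      ≤ ∑ w ∈ G.erase u, ∏ j, c w j := step1
    _ ≤ ∑ w ∈ G.erase u, (∏ j ∈ S w, t j) * ∏ j ∈ L w, c w j :=
        Finset.sum_le_sum fun w _ => step2 w
    _ = (∑ w ∈ (G.erase u).filter (fun w => S w = ∅),
          (∏ j ∈ S w, t j) * ∏ j ∈ L w, c w j)
        + ∑ J ∈ univ.filter (fun J : Finset K => ¬ J = ∅),
            ∑ w ∈ (G.erase u).filter (fun w => S w = J),
              (∏ j ∈ S w, t j) * ∏ j ∈ L w, c w j := by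
        rw [step3, hsplit]
    _ ≤ ((∏ j, (β j + 1)) - 1)
        + ∑ J ∈ univ.filter (fun J : Finset K => ¬ J = ∅),
            (∏ j ∈ J, t j) * ((fiberMax G J : ℝ) * ∏ j ∈ Jᶜ, (β j + 1)) := by
        refine add_le_add claimA (Finset.sum_le_sum fun J hJ => ?_)
        exact claimB J (Finset.nonempty_iff_ne_empty.mpr
          (Finset.mem_filter.mp hJ).2)
    _ = (∑ J ∈ Finset.univ.powerset.filter (fun J : Finset K => J.Nonempty),
          (fiberMax G J : ℝ) * (∏ j ∈ J, α j) * (∏ j ∈ Jᶜ, (β j + 1))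
            / ∏ j ∈ J, (Fintype.card (B j) : ℝ))
        + ((∏ j, (β j + 1)) - 1) := by
        rw [hidx, add_comm]
        congr 1
        refine Finset.sum_congr rfl fun J _ => ?_
        have : ∏ j ∈ J, t j
            = (∏ j ∈ J, α j) / ∏ j ∈ J, (Fintype.card (B j) : ℝ) := by
          rw [ht, ← Finset.prod_div_distrib]
        rw [this]
        ring
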